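/- Let q be a prime power and f(x) = x^n + a x^s + b ∈ F_q[x] with a, b ≠ 0 and n > s > 0. Let δ = gcd(n, s, q-1). Then the number of distinct roots of f in F_q is at most δ · ⌊1/2 + √((q-1)/δ)⌋. -/

import Mathlib

open Polynomial Finset

-- key algebraic lemma: injectivity of quotients of points on a line
lemma key_alg {F : Type*} [Field F] (a b : F) (ha : a ≠ 0) (hb : b ≠ 0)
    (v1 v2 v3 v4 : F) (hne : v1 ≠ v2)
    (hu : (a*v1+b) * (a*v4+b) = (a*v3+b) * (a*v2+b))
    (hv : v1 * v4 = v3 * v2) : v1 = v3 ∧ v2 = v4 := by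
  have iii : a*b*(v1+v4) = a*b*(v2+v3) := by linear_combination hu - a^2*hv
  have iii' : v1 + v4 = v2 + v3 := mul_left_cancel₀ (mul_ne_zero ha hb) iii
  have quad : (v1 - v2) * (v1 - v3) = 0 := by linear_combination -hv + v1 * iii'
  rcases mul_eq_zero.1 quad with h | h
  · exact absurd (sub_eq_zero.1 h) hne
  · exact ⟨sub_eq_zero.1 h, by linear_combination h - iii'⟩

lemma card_nthRootsFinset_eq (F : Type*) [Field F] [Fintype F] [DecidableEq F]
    {d : ℕ} (hd : 0 < d) (hdvd : d ∣ Fintype.card F - 1) :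
    (nthRootsFinset d (1 : F)).card = d := by
  have hq : 1 < Fintype.card F := Fintype.one_lt_card
  obtain ⟨g, hg⟩ := IsCyclic.exists_ofOrder_eq_natCard (α := Fˣ)
  have hgo : orderOf g = Fintype.card F - 1 := by
    rw [hg, Nat.card_eq_fintype_card, Fintype.card_units]
  set m := (Fintype.card F - 1) / d with hm
  have hmd : (Fintype.card F - 1) / m = d := by
    rw [hm, Nat.div_div_self hdvd (by omega)]
  have hu : orderOf (g ^ m) = d := by
    rw [orderOf_pow, hgo, Nat.gcd_eq_right (Nat.div_dvd_of_dvd hdvd), hmd]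
  have hζ : IsPrimitiveRoot ((g ^ m : Fˣ) : F) d := by
    have := IsPrimitiveRoot.orderOf ((g ^ m : Fˣ) : F)
    rwa [orderOf_units, hu] at this
  exact hζ.card_nthRootsFinset

theorem stmt4 (F : Type*) [Field F] [Fintype F] [DecidableEq F]
    (n s : ℕ) (a b : F) (ha : a ≠ 0) (hb : b ≠ 0) (hs : 0 < s) (hsn : s < n)
    (δ : ℕ) (hδ : δ = Nat.gcd n (Nat.gcd s (Fintype.card F - 1))) :
    (X ^ n + C a * X ^ s + C b : F[X]).roots.toFinset.card ≤
      δ * ⌊(1 : ℝ) / 2 + Real.sqrt (((Fintype.card F - 1 : ℕ) : ℝ) / (δ : ℝ))⌋₊ := by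
  classical
  have hq2 : 1 < Fintype.card F := Fintype.one_lt_card
  have hn : 0 < n := hs.trans hsn
  have hδn : δ ∣ n := hδ ▸ Nat.gcd_dvd_left _ _
  have hδs : δ ∣ s := hδ ▸ (Nat.gcd_dvd_right n _).trans (Nat.gcd_dvd_left s _)
  have hδq : δ ∣ Fintype.card F - 1 :=
    hδ ▸ (Nat.gcd_dvd_right n _).trans (Nat.gcd_dvd_right s _)
  have hδpos : 0 < δ := hδ ▸ Nat.gcd_pos_of_pos_left _ hn
  set f : F[X] := X ^ n + C a * X ^ s + C b with hf
  have hf0 : f ≠ 0 := by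
    intro h
    have hc : f.coeff n = 0 := by rw [h]; simp
    rw [hf] at hc
    simp [coeff_X_pow, coeff_C, hsn.ne', hn.ne'] at hc
  set R := f.roots.toFinset with hR
  have hmem : ∀ x, x ∈ R ↔ x ^ n + a * x ^ s + b = 0 := by
    intro x
    rw [hR, Multiset.mem_toFinset, mem_roots hf0, IsRoot, hf]
    simp
  have hx0 : ∀ x ∈ R, x ≠ 0 := by
    intro x hx hx0
    rw [hmem, hx0, zero_pow hn.ne', zero_pow hs.ne'] at hx
    simp at hx
    exact hb hx
  have hZ : (nthRootsFinset δ (1 : F)).card = δ := card_nthRootsFinset_eq F hδpos hδq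
  have hpowδ : ∀ u : F, u ≠ 0 → u ^ n = 1 → u ^ s = 1 → u ^ δ = 1 := by
    intro u hu h1 h2
    have h3 : u ^ (Fintype.card F - 1) = 1 := FiniteField.pow_card_sub_one_eq_one u hu
    have hdvd : orderOf u ∣ δ := hδ ▸ Nat.dvd_gcd (orderOf_dvd_of_pow_eq_one h1)
      (Nat.dvd_gcd (orderOf_dvd_of_pow_eq_one h2) (orderOf_dvd_of_pow_eq_one h3))
    exact orderOf_dvd_iff_pow_eq_one.1 hdvd
  set φ : F → F × F := fun x => (x ^ n, x ^ s) with hφ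
  set P := R.image φ with hP
  -- Step 1 : each fiber has at most δ elements
  have step1 : R.card ≤ P.card * δ := by
    rw [Finset.card_eq_sum_card_image φ R]
    have := Finset.sum_le_card_nsmul P (fun p => (R.filter fun x => φ x = p).card) δ ?_
    · simpa [smul_eq_mul] using this
    intro p hp
    obtain ⟨x0, hx0R, hx0p⟩ := Finset.mem_image.1 hp
    have hx0ne : x0 ≠ 0 := hx0 _ hx0R
    calc (R.filter fun x => φ x = p).card
        ≤ ((nthRootsFinset δ (1 : F)).image (fun z => x0 * z)).card := by
          apply Finset.card_le_card
          intro y hy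
          rw [Finset.mem_filter] at hy
          obtain ⟨hyR, hyp⟩ := hy
          have hyne : y ≠ 0 := hx0 _ hyR
          have h1 : (y / x0) ^ n = 1 := by
            rw [div_pow]
            have : y ^ n = x0 ^ n := by
              have := hyp.trans hx0p.symm
              exact (Prod.ext_iff.1 this).1
            rw [this, div_self (pow_ne_zero _ hx0ne)]
          have h2 : (y / x0) ^ s = 1 := by
            rw [div_pow]
            have : y ^ s = x0 ^ s := by
              have := hyp.trans hx0p.symm
              exact (Prod.ext_iff.1 this).2
            rw [this, div_self (pow_ne_zero _ hx0ne)]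
          refine Finset.mem_image.2 ⟨y / x0, ?_, by field_simp⟩
          rw [Polynomial.mem_nthRootsFinset hδpos]
          exact hpowδ _ (div_ne_zero hyne hx0ne) h1 h2
      _ ≤ δ := le_trans Finset.card_image_le hZ.le
  -- facts about points of P
  have hPfact : ∀ p ∈ P, p.2 ≠ 0 ∧ p.1 = -(a * p.2 + b) ∧ ∃ x : F, x ≠ 0 ∧ φ x = p := by
    intro p hp
    obtain ⟨x, hxR, hxp⟩ := Finset.mem_image.1 hp
    have hxne : x ≠ 0 := hx0 _ hxR
    have hroot := (hmem x).1 hxR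
    refine ⟨?_, ?_, x, hxne, hxp⟩
    · rw [← hxp]; exact pow_ne_zero _ hxne
    · rw [← hxp]; simp only [hφ]; linear_combination hroot
  -- the group C
  set T := (Finset.univ.filter fun x : F => x ≠ 0) with hT
  have hTcard : T.card = Fintype.card F - 1 := by
    rw [hT, Finset.filter_ne', Finset.card_erase_of_mem (Finset.mem_univ _), Finset.card_univ]
  set Cg := T.image φ with hCg
  have hC1 : ((1 : F), (1 : F)) ∈ Cg :=
    Finset.mem_image.2 ⟨1, by simp [hT], by simp [hφ]⟩
  have hCcard : Cg.card * δ ≤ Fintype.card F - 1 := by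
    rw [← hTcard, Finset.card_eq_sum_card_image φ T]
    calc Cg.card * δ = ∑ _p ∈ Cg, δ := by rw [Finset.sum_const, smul_eq_mul]
      _ ≤ ∑ p ∈ Cg, (T.filter fun x => φ x = p).card := by
          apply Finset.sum_le_sum
          intro p hp
          obtain ⟨t0, ht0T, ht0p⟩ := Finset.mem_image.1 hp
          have ht0 : t0 ≠ 0 := by
            rw [hT, Finset.mem_filter] at ht0T; exact ht0T.2
          calc δ = ((nthRootsFinset δ (1 : F)).image (fun z => t0 * z)).card := by
                rw [Finset.card_image_of_injective _ (mul_right_injective₀ ht0), hZ]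
            _ ≤ (T.filter fun x => φ x = p).card := by
                apply Finset.card_le_card
                intro y hy
                obtain ⟨z, hz, hzy⟩ := Finset.mem_image.1 hy
                rw [Polynomial.mem_nthRootsFinset hδpos] at hz
                have hzne : z ≠ 0 := by
                  intro h; rw [h, zero_pow hδpos.ne'] at hz; exact zero_ne_one hz
                obtain ⟨kn, hkn⟩ := hδn
                obtain ⟨ks, hks⟩ := hδs
                have hzn : z ^ n = 1 := by rw [hkn, pow_mul, hz, one_pow]
                have hzs : z ^ s = 1 := by rw [hks, pow_mul, hz, one_pow]
                rw [Finset.mem_filter]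
                constructor
                · rw [hT, Finset.mem_filter]
                  exact ⟨Finset.mem_univ _, hzy ▸ mul_ne_zero ht0 hzne⟩
                · rw [← hzy, ← ht0p]
                  simp only [hφ, Prod.mk.injEq, mul_pow]
                  rw [hzn, hzs, mul_one, mul_one]
                  exact ⟨rfl, rfl⟩
      _ = ∑ p ∈ T.image φ, (T.filter fun x => φ x = p).card := by rw [hCg]
  -- Step 2 : injection of off-diagonal pairs into Cg \ {(1,1)}
  have step2 : P.card * P.card - P.card ≤ Cg.card - 1 := by
    rw [← Finset.offDiag_card, ← Finset.card_erase_of_mem hC1]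
    apply Finset.card_le_card_of_injOn
      (fun pq : (F × F) × (F × F) => (pq.1.1 / pq.2.1, pq.1.2 / pq.2.2))
    · -- maps to
      intro pq hpq
      rw [Finset.mem_coe, Finset.mem_offDiag] at hpq
      obtain ⟨hp1, hp2, hne⟩ := hpq
      obtain ⟨hv1, hu1, x, hxne, hxp⟩ := hPfact _ hp1
      obtain ⟨hv2, hu2, y, hyne, hyp⟩ := hPfact _ hp2
      rw [Finset.mem_coe, Finset.mem_erase]
      constructor
      · intro h
        apply hne
        rw [Prod.ext_iff] at h
        have h1 : pq.1.1 = pq.2.1 := by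
          have := h.1
          have hy1 : pq.2.1 ≠ 0 := by rw [← hyp]; exact pow_ne_zero _ hyne
          field_simp at this
          exact this
        have h2 : pq.1.2 = pq.2.2 := by
          have := h.2
          field_simp at this
          exact this
        exact Prod.ext h1 h2
      · refine Finset.mem_image.2 ⟨x / y, ?_, ?_⟩
        · rw [hT, Finset.mem_filter]
          exact ⟨Finset.mem_univ _, div_ne_zero hxne hyne⟩
        · simp only [hφ, div_pow]
          rw [← hxp, ← hyp]
    · -- injective
      intro pq hpq pq' hpq' heq
      rw [Finset.coe_offDiag] at hpq hpq'
      obtain ⟨hp1, hp2, hne⟩ := hpq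
      obtain ⟨hp3, hp4, hne'⟩ := hpq'
      obtain ⟨hv1, hu1, -⟩ := hPfact _ hp1
      obtain ⟨hv2, hu2, x2, hx2ne, hx2p⟩ := hPfact _ hp2
      obtain ⟨hv3, hu3, -⟩ := hPfact _ hp3
      obtain ⟨hv4, hu4, x4, hx4ne, hx4p⟩ := hPfact _ hp4
      have hu2ne : pq.2.1 ≠ 0 := by rw [← hx2p]; exact pow_ne_zero _ hx2ne
      have hu4ne : pq'.2.1 ≠ 0 := by rw [← hx4p]; exact pow_ne_zero _ hx4ne
      rw [Prod.ext_iff] at heq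
      have hu : pq.1.1 * pq'.2.1 = pq'.1.1 * pq.2.1 :=
        (div_eq_div_iff hu2ne hu4ne).1 heq.1
      have hv : pq.1.2 * pq'.2.2 = pq'.1.2 * pq.2.2 :=
        (div_eq_div_iff hv2 hv4).1 heq.2
      have hne12 : pq.1.2 ≠ pq.2.2 := by
        intro h
        apply hne
        refine Prod.ext ?_ h
        rw [hu1, hu2, h]
      have hukey : (a * pq.1.2 + b) * (a * pq'.2.2 + b)
          = (a * pq'.1.2 + b) * (a * pq.2.2 + b) := by
        have := hu
        rw [hu1, hu2, hu3, hu4] at this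
        linear_combination this
      obtain ⟨h13, h24⟩ := key_alg a b ha hb _ _ _ _ hne12 hukey hv
      have e1 : pq.1 = pq'.1 := by
        refine Prod.ext ?_ h13
        rw [hu1, hu3, h13]
      have e2 : pq.2 = pq'.2 := by
        refine Prod.ext ?_ h24
        rw [hu2, hu4, h24]
      exact Prod.ext e1 e2
  -- final arithmetic
  have hCpos : 1 ≤ Cg.card := Finset.card_pos.2 ⟨_, hC1⟩
  set k := P.card with hk
  have hknat : k * k ≤ (Cg.card - 1) + k := by omega
  set M : ℝ := ((Fintype.card F - 1 : ℕ) : ℝ) / (δ : ℝ) with hM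
  have hM0 : 0 ≤ M := by positivity
  have hsq : Real.sqrt M ^ 2 = M := Real.sq_sqrt hM0
  have hsnn : 0 ≤ Real.sqrt M := Real.sqrt_nonneg M
  have hCle : (Cg.card : ℝ) ≤ M := by
    rw [hM, le_div_iff₀ (by exact_mod_cast hδpos)]
    exact_mod_cast hCcard
  have hkR : (k : ℝ) * k ≤ M - 1 + k := by
    have h1 : (k : ℝ) * k ≤ ((Cg.card : ℝ) - 1) + k := by
      have := hknat
      have hcast : ((Cg.card - 1 : ℕ) : ℝ) = (Cg.card : ℝ) - 1 := by
        rw [Nat.cast_sub hCpos]; norm_num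
      calc (k : ℝ) * k = ((k * k : ℕ) : ℝ) := by push_cast; ring
        _ ≤ (((Cg.card - 1) + k : ℕ) : ℝ) := by exact_mod_cast hknat
        _ = ((Cg.card : ℝ) - 1) + k := by rw [Nat.cast_add, hcast]
    linarith
  have hkfloor : k ≤ ⌊(1 : ℝ) / 2 + Real.sqrt M⌋₊ := by
    apply Nat.le_floor
    by_contra hcon
    push_neg at hcon
    have hfac : (0:ℝ) < (k : ℝ) - 1/2 - Real.sqrt M := by linarith
    have hfac2 : (0:ℝ) < (k : ℝ) - 1/2 + Real.sqrt M := by linarith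
    nlinarith [mul_pos hfac hfac2]
  calc R.card ≤ P.card * δ := step1
    _ = δ * k := by rw [hk, mul_comm]
    _ ≤ δ * ⌊(1 : ℝ) / 2 + Real.sqrt M⌋₊ := Nat.mul_le_mul_left _ hkfloor
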